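/- For any odd prime p, the Laurent series Θ̃_p(t) := t·Θ_p(t) = Σ_{i=0}^∞ c_i^{(p)} t^{-i} ∈ F_p((t^{-1})) satisfies Θ̃_p(t) = Θ̃_p(t)^p · Σ_{i=0}^{(p−1)/2} binom((p−1)/2, i) t^{-2i}; equivalently, Θ̃_p(t)^{p−1} · (1 + t^{-2})^{(p−1)/2} = 1. -/

import Mathlib

open scoped Classical
open Filter Polynomial

noncomputable section

namespace EscapeOfMass

variable {K : Type*} [Field K]

/-- The element `t` of `K((t⁻¹))`, modelled as the Laurent series field `K⸨X⸩`
in the variable `X = t⁻¹`; thus `t = X⁻¹ = single (-1) 1`. -/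
def tLS (K : Type*) [Field K] : LaurentSeries K := HahnSeries.single (-1 : ℤ) 1

/-- The polynomial part of a Laurent series in `K((t⁻¹))` (the terms with
non-negative powers of `t`, i.e. non-positive powers of `X`). -/
def polyPart (f : LaurentSeries K) : LaurentSeries K :=
  { coeff := fun n => if n ≤ 0 then f.coeff n else 0
    isPWO_support' := by
      refine f.isPWO_support'.mono fun n hn => ?_
      simp only [Function.mem_support, ne_eq] at hn ⊢
      intro h
      exact hn (by simp [h]) }

/-- The fractional part `⟨f⟩` of a Laurent series in `K((t⁻¹))`. -/
def fracPart (f : LaurentSeries K) : LaurentSeries K := f - polyPart f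

/-- The complete quotients of the continued fraction expansion of `f`. -/
def cfQuot (f : LaurentSeries K) : ℕ → LaurentSeries K
  | 0 => f
  | i + 1 => (cfQuot f i - polyPart (cfQuot f i))⁻¹

/-- The partial quotients `A_i` of the continued fraction expansion of `f`. -/
def cfPQ (f : LaurentSeries K) (i : ℕ) : LaurentSeries K := polyPart (cfQuot f i)

/-- The degree (as an integer) of a Laurent series viewed in `K((t⁻¹))`:
for a nonzero polynomial in `t` this is the usual degree. -/
def degZ (f : LaurentSeries K) : ℤ := -f.order

/-- `f` is a rational Laurent series, i.e. lies in `K(t)`. -/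
def IsRatLS (f : LaurentSeries K) : Prop := ∃ r : RatFunc K, (r : LaurentSeries K) = f

/-- `f` is a quadratic irrational: it is irrational and a root of a quadratic
polynomial with coefficients in `K[t]`. -/
def IsQuadIrr (f : LaurentSeries K) : Prop :=
  ¬ IsRatLS f ∧ ∃ a b c : Polynomial K, a ≠ 0 ∧
    Polynomial.aeval (tLS K) a * f ^ 2 + Polynomial.aeval (tLS K) b * f +
      Polynomial.aeval (tLS K) c = 0

/-- `(m, ℓ)` is a window for the periodic part of the continued fraction of `f`:
the partial quotients are periodic with period `ℓ ≥ 1` from index `m + 1` on. -/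
def PeriodWindow (f : LaurentSeries K) (m ℓ : ℕ) : Prop :=
  1 ≤ ℓ ∧ ∀ i : ℕ, m + 1 ≤ i → cfPQ f (i + ℓ) = cfPQ f i

/-- The `n`-escape of mass of the continued fraction expansion of `f`: the proportion,
within one period of the periodic part of the partial quotients of `f`, of the sum
`∑ max (deg A_i - n) 0` relative to `∑ deg A_i`. -/
def eMassOf (f : LaurentSeries K) (n : ℕ) : ℝ :=
  if h : ∃ s : ℕ × ℕ, PeriodWindow f s.1 s.2 then
    (∑ i ∈ Finset.Ico ((Classical.choose h).1 + 1)
        ((Classical.choose h).1 + 1 + (Classical.choose h).2),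
        max ((degZ (cfPQ f i) : ℝ) - n) 0) /
    (∑ i ∈ Finset.Ico ((Classical.choose h).1 + 1)
        ((Classical.choose h).1 + 1 + (Classical.choose h).2),
        (degZ (cfPQ f i) : ℝ))
  else 0

/-- The `n`-escape of mass in the `k`-th diagonal of `f` with respect to the
sequence `{g^k}`. -/
def eMassP (g f : LaurentSeries K) (k n : ℕ) : ℝ := eMassOf (g ^ k * f) n

/-- The `n`-escape of mass in the `k`-th diagonal of `f` with respect to `{t^k}`. -/
def eMass (f : LaurentSeries K) (k n : ℕ) : ℝ := eMassP (tLS K) f k n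

/-- `f` exhibits `c` escape of mass with respect to the sequence `{g^k}`. -/
def ExhibitsEscape (g f : LaurentSeries K) (c : ℝ) : Prop :=
  ∃ L : ℝ, Tendsto (fun n : ℕ => Filter.liminf (fun k : ℕ => eMassP g f k n) atTop)
    atTop (nhds L) ∧ c ≤ L

/-- `f` exhibits exactly `c` escape of mass with respect to the sequence `{g^k}`. -/
def ExhibitsExactEscape (g f : LaurentSeries K) (c : ℝ) : Prop :=
  Tendsto (fun n : ℕ => Filter.liminf (fun k : ℕ => eMassP g f k n) atTop)
    atTop (nhds c)

/-- `f` exhibits full (`c = 1`) maximal escape of mass with respect to `{g^k}`. -/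
def ExhibitsFullMaxEscape (g f : LaurentSeries K) : Prop :=
  Tendsto (fun n : ℕ => Filter.limsup (fun k : ℕ => eMassP g f k n) atTop)
    atTop (nhds 1)

/-- `A ⊆ ℕ` has natural density `c`. -/
def HasDensity (A : Set ℕ) (c : ℝ) : Prop :=
  Tendsto (fun M : ℕ => (((Finset.Icc 1 M).filter fun k => k ∈ A).card : ℝ) / M)
    atTop (nhds c)

/-- `f` exhibits full generic escape of mass with respect to `{t^k}`. -/
def FullGenericEscape (f : LaurentSeries K) : Prop :=
  ∀ ε : ℝ, 0 < ε → ∃ dens : ℕ → ℝ,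
    (∀ n : ℕ, HasDensity {k : ℕ | 1 - ε < eMass f k n} (dens n)) ∧
    Tendsto dens atTop (nhds 1)

/-- Substitution `t ↦ P(t)` on Laurent series: for `f = ∑_{i ≥ d} a_i t^{-i}` (with
`d = f.order` in the variable `X = t⁻¹`), `substLS f P = ∑_{i ≥ d} a_i P(t)^{-i}`. -/
def substLS (f : LaurentSeries K) (P : Polynomial K) : LaurentSeries K :=
  (Polynomial.aeval (tLS K) P)⁻¹ ^ f.order *
    HahnSeries.ofPowerSeries ℤ K
      (PowerSeries.mk fun n =>
        ∑ j ∈ Finset.range (n + 1),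
          f.coeff (f.order + j) * (((Polynomial.aeval (tLS K) P)⁻¹ ^ j).coeff (n : ℤ)))

/-- The `p`-Cantor sequence over `ZMod p`. -/
def cantor (p : ℕ) : ℕ → ZMod p
  | 0 => 1
  | (n + 1) =>
    if hp : 1 < p then
      if (n + 1) % p % 2 = 1 then 0
      else (((p - 1) / 2).choose (((n + 1) % p) / 2) : ZMod p) * cantor p ((n + 1) / p)
    else 0
  decreasing_by exact Nat.div_lt_self (Nat.succ_pos _) hp

/-- `Θ̃_p = ∑_{i ≥ 0} c_i^{(p)} t^{-i}`. -/
def cantorTilde (p : ℕ) : LaurentSeries (ZMod p) :=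
  HahnSeries.ofPowerSeries ℤ (ZMod p) (PowerSeries.mk fun i => cantor p i)

/-- `Θ_p = t⁻¹ ∑_{i ≥ 0} c_i^{(p)} t^{-i}`. -/
def cantorTheta (p : ℕ) : LaurentSeries (ZMod p) :=
  HahnSeries.single (1 : ℤ) 1 * cantorTilde p

/-- The Thue–Morse sequence over `ZMod 2`. -/
def thueMorse (n : ℕ) : ZMod 2 := ((Nat.digits 2 n).sum : ZMod 2)

/-- The Thue–Morse Laurent series `τ = ∑_{n ≥ 1} τ_n t^{-n}`. -/
def tmSeries : LaurentSeries (ZMod 2) :=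
  HahnSeries.ofPowerSeries ℤ (ZMod 2) (PowerSeries.mk fun n => thueMorse n)

/-- The extension of a one-sided sequence to `ℤ` by zero. -/
def extendSeq (S : ℕ → K) : ℤ → K := fun i => if 0 ≤ i then S i.toNat else 0

/-- The entry `W(S)[m, n]` of the number wall of the (doubly infinite) sequence `s`:
the determinant of the `(m+1) × (m+1)` Toeplitz matrix `(s_{n - i + j})`. -/
def wallEntry (s : ℤ → K) (m : ℕ) (n : ℤ) : K :=
  (Matrix.of fun i j : Fin (m + 1) => s (n - (i : ℕ) + (j : ℕ))).det

/-- The Laurent series `t⁻¹ ∑_{i ≥ 0} s_i t^{-i}` associated to a sequence. -/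
def seriesOf (S : ℕ → K) : LaurentSeries K :=
  HahnSeries.single (1 : ℤ) 1 * HahnSeries.ofPowerSeries ℤ K (PowerSeries.mk S)

/-- The coefficient sequence of `Θ = t⁻¹ ∑ s_i t^{-i}`, extended to `ℤ` by zero. -/
def coeffSeq (f : LaurentSeries K) : ℤ → K := fun i => if 0 ≤ i then f.coeff (i + 1) else 0

/-- The absolute value of a Laurent series in `F_q((t⁻¹))`: `|f| = q^{deg f}`. -/
def absLS {K : Type*} [Field K] [Fintype K] (f : LaurentSeries K) : ℝ :=
  if f = 0 then 0 else (Fintype.card K : ℝ) ^ (-f.order)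



lemma coeff_pow_char {p : ℕ} [Fact p.Prime] (f : PowerSeries (ZMod p)) (n : ℕ) :
    PowerSeries.coeff n (f ^ p) =
      if p ∣ n then PowerSeries.coeff (n / p) f else 0 := by
  have hp : p.Prime := Fact.out
  set Q := PowerSeries.trunc (n + 1) f with hQ
  have h1 := PowerSeries.trunc_trunc_pow f (n + 1) p
  have h2 := congrArg (fun q : Polynomial (ZMod p) => q.coeff n) h1
  simp only [PowerSeries.coeff_trunc, Nat.lt_succ_self, if_pos] at h2
  rw [← h2, ← Polynomial.coe_pow, Polynomial.coeff_coe]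
  rw [← Polynomial.map_frobenius_expand p Q, Polynomial.coeff_map, frobenius_def, ZMod.pow_card,
    Polynomial.coeff_expand hp.pos]
  split_ifs with h
  · rw [hQ, PowerSeries.coeff_trunc, if_pos (Nat.lt_succ_of_le (Nat.div_le_self n p))]
  · rfl

lemma cantor_eq_zero_of_odd {p : ℕ} (hp : 1 < p) {n : ℕ} (h : n % p % 2 = 1) :
    cantor p n = 0 := by
  cases n with
  | zero => simp at h
  | succ m => rw [cantor]; simp [hp, h]

lemma cantor_eq_of_even {p : ℕ} (hp : 1 < p) {n : ℕ} (h : n % p % 2 = 0) :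
    cantor p n = (((p - 1) / 2).choose ((n % p) / 2) : ZMod p) * cantor p (n / p) := by
  cases n with
  | zero => simp [cantor]
  | succ m => rw [cantor]; simp [hp, h]

lemma key {p : ℕ} [Fact p.Prime] (hodd : Odd p) :
    (PowerSeries.mk (cantor p) : PowerSeries (ZMod p)) =
      (PowerSeries.mk (cantor p)) ^ p *
        ∑ i ∈ Finset.range ((p - 1) / 2 + 1),
          PowerSeries.C ((((p - 1) / 2).choose i : ZMod p)) *
            PowerSeries.X ^ (2 * i) := by
  have hp : p.Prime := Fact.out
  have hp1 : 1 < p := hp.one_lt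
  set d := (p - 1) / 2 with hd
  have h2d : 2 * d = p - 1 := by
    have := Nat.odd_iff.mp hodd
    omega
  set F := (PowerSeries.mk (cantor p) : PowerSeries (ZMod p)) with hF
  ext n
  rw [Finset.mul_sum, map_sum]
  have hsummand : ∀ i ∈ Finset.range (d + 1),
      PowerSeries.coeff n (F ^ p * (PowerSeries.C ((d.choose i : ZMod p)) *
          PowerSeries.X ^ (2 * i))) =
        if 2 * i = n % p then (d.choose i : ZMod p) * cantor p (n / p) else 0 := by
    intro i hi
    rw [Finset.mem_range] at hi
    have h2i : 2 * i < p := by omega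
    rw [← mul_assoc, PowerSeries.coeff_mul_X_pow']
    split_ifs with hle heq heq
    · rw [PowerSeries.coeff_mul_C, coeff_pow_char]
      have h3 := Nat.mod_add_div n p
      have h4 : n - 2 * i = p * (n / p) := by omega
      have hdvd : p ∣ n - 2 * i := ⟨n / p, h4⟩
      rw [if_pos hdvd]
      have hq : (n - 2 * i) / p = n / p := by
        rw [h4, Nat.mul_div_cancel_left _ hp.pos]
      rw [hq, PowerSeries.coeff_mk, mul_comm]
    · rw [PowerSeries.coeff_mul_C, coeff_pow_char]
      split_ifs with hdvd
      · exfalso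
        obtain ⟨q, hq⟩ := hdvd
        have hn : n = p * q + 2 * i := by omega
        have : n % p = 2 * i := by
          rw [hn, Nat.mul_add_mod, Nat.mod_eq_of_lt h2i]
        exact heq this.symm
      · exact zero_mul _
    · exact absurd (heq ▸ Nat.mod_le n p) hle
    · rfl
  rw [Finset.sum_congr rfl hsummand, PowerSeries.coeff_mk]
  rcases Nat.even_or_odd (n % p) with he | ho
  · have h2 : (n % p) % 2 = 0 := Nat.even_iff.mp he
    have hmem : n % p / 2 ∈ Finset.range (d + 1) := by
      rw [Finset.mem_range]
      have : n % p < p := Nat.mod_lt _ hp.pos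
      omega
    have : ∀ i ∈ Finset.range (d + 1),
        (if 2 * i = n % p then (d.choose i : ZMod p) * cantor p (n / p) else 0) =
        if i = n % p / 2 then (d.choose i : ZMod p) * cantor p (n / p) else 0 := by
      intro i _
      congr 1
      simp only [eq_iff_iff]
      omega
    rw [Finset.sum_congr rfl this, Finset.sum_ite_eq' _ _ _, if_pos hmem,
      cantor_eq_of_even hp1 h2]
  · have h2 : (n % p) % 2 = 1 := Nat.odd_iff.mp ho
    have : ∀ i ∈ Finset.range (d + 1),
        (if 2 * i = n % p then (d.choose i : ZMod p) * cantor p (n / p) else 0) = 0 := by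
      intro i _
      rw [if_neg]
      omega
    rw [Finset.sum_congr rfl this, Finset.sum_const_zero, cantor_eq_zero_of_odd hp1 h2]

lemma binom_expand {R : Type*} [CommRing R] (d : ℕ) :
    ((1 : PowerSeries R) + PowerSeries.X ^ 2) ^ d =
      ∑ i ∈ Finset.range (d + 1),
        PowerSeries.C ((d.choose i : R)) * PowerSeries.X ^ (2 * i) := by
  rw [add_comm, add_pow]
  refine Finset.sum_congr rfl fun i hi => ?_
  rw [one_pow, mul_one, ← pow_mul, mul_comm 2 i, mul_comm, ← map_natCast (PowerSeries.C (R := R)),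
    mul_comm i 2]

/-- The series `Θ̃_p = ∑ c_i^{(p)} t^{-i}` satisfies
`Θ̃_p = Θ̃_p^p · ∑_{i=0}^{(p−1)/2} binom((p−1)/2, i) t^{-2i}`, equivalently
`Θ̃_p^{p−1} (1 + t^{-2})^{(p−1)/2} = 1`. -/
theorem pCantor_tilde_functional_equation (p : ℕ) [Fact p.Prime] (hodd : Odd p) :
    cantorTilde p =
      cantorTilde p ^ p *
        ∑ i ∈ Finset.range ((p - 1) / 2 + 1),
          HahnSeries.single ((2 * i : ℕ) : ℤ) ((((p - 1) / 2).choose i : ZMod p)) ∧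
    cantorTilde p ^ (p - 1) *
        (1 + HahnSeries.single (2 : ℤ) (1 : ZMod p)) ^ ((p - 1) / 2) = 1 := by
  have hp : p.Prime := Fact.out
  have hmap : ∀ (k : ℕ) (a : ZMod p),
      (HahnSeries.ofPowerSeries ℤ (ZMod p)) (PowerSeries.C a * PowerSeries.X ^ k)
        = HahnSeries.single ((k : ℤ)) a := by
    intro k a
    rw [map_mul, HahnSeries.ofPowerSeries_C, HahnSeries.ofPowerSeries_X_pow,
      HahnSeries.C_apply, HahnSeries.single_mul_single, zero_add, mul_one]
  have hsum : (∑ i ∈ Finset.range ((p - 1) / 2 + 1),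
      HahnSeries.single ((2 * i : ℕ) : ℤ) ((((p - 1) / 2).choose i : ZMod p))) =
      (HahnSeries.ofPowerSeries ℤ (ZMod p))
        (∑ i ∈ Finset.range ((p - 1) / 2 + 1),
          PowerSeries.C ((((p - 1) / 2).choose i : ZMod p)) *
            PowerSeries.X ^ (2 * i)) := by
    rw [map_sum]
    exact Finset.sum_congr rfl fun i _ => (hmap _ _).symm
  have h1 : cantorTilde p = cantorTilde p ^ p * ∑ i ∈ Finset.range ((p - 1) / 2 + 1),
      HahnSeries.single ((2 * i : ℕ) : ℤ) ((((p - 1) / 2).choose i : ZMod p)) := by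
    have hc := congrArg (HahnSeries.ofPowerSeries ℤ (ZMod p)) (key (p := p) hodd)
    rw [map_mul, map_pow, map_sum] at hc
    simp only [hmap] at hc
    exact hc
  refine ⟨h1, ?_⟩
  have hG : (1 + HahnSeries.single (2 : ℤ) (1 : ZMod p)) ^ ((p - 1) / 2) =
      ∑ i ∈ Finset.range ((p - 1) / 2 + 1),
        HahnSeries.single ((2 * i : ℕ) : ℤ) ((((p - 1) / 2).choose i : ZMod p)) := by
    rw [hsum, ← binom_expand ((p - 1) / 2), map_pow, map_add,
      (HahnSeries.ofPowerSeries ℤ (ZMod p)).map_one, HahnSeries.ofPowerSeries_X_pow]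
    norm_num
  have hne : cantorTilde p ≠ 0 := by
    intro h
    have h00 := congrArg (fun f : HahnSeries ℤ (ZMod p) => f.coeff 0) h
    simp only [cantorTilde, HahnSeries.coeff_zero] at h00
    rw [show ((0 : ℤ)) = ((0 : ℕ) : ℤ) from rfl,
      HahnSeries.ofPowerSeries_apply_coeff] at h00
    simp [cantor] at h00
  have hp1 : p - 1 + 1 = p := Nat.succ_pred_eq_of_pos hp.pos
  have h2 : cantorTilde p ^ (p - 1) *
      (1 + HahnSeries.single (2 : ℤ) (1 : ZMod p)) ^ ((p - 1) / 2) * cantorTilde p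
      = 1 * cantorTilde p := by
    rw [one_mul]
    calc cantorTilde p ^ (p - 1) *
        (1 + HahnSeries.single (2 : ℤ) (1 : ZMod p)) ^ ((p - 1) / 2) * cantorTilde p
        = cantorTilde p ^ (p - 1) * cantorTilde p *
          (1 + HahnSeries.single (2 : ℤ) (1 : ZMod p)) ^ ((p - 1) / 2) := by ring
      _ = cantorTilde p ^ p *
          (1 + HahnSeries.single (2 : ℤ) (1 : ZMod p)) ^ ((p - 1) / 2) := by
          rw [← pow_succ, hp1]
      _ = cantorTilde p := by rw [hG]; exact h1.symm
  exact mul_right_cancel₀ hne h2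


end EscapeOfMass
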